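/- (Julia's inequality in the disk) Let f be holomorphic on an open set containing the open unit disk 𝔻 and the point 1, with |f(z)| < 1 for all z ∈ 𝔻, f(1) = 1, and f not constant. Then f'(1) is a positive real number, and for every z ∈ 𝔻: f'(1) · (1 − |f(z)|²)/|1 − f(z)|² ≥ (1 − |z|²)/|1 − z|². -/

import Mathlib

open Complex Metric

/-- Key algebraic identity. -/
lemma abs_id (a b : ℂ) :
    ‖1 - (starRingEnd ℂ) a * b‖ ^ 2 - ‖a - b‖ ^ 2 =
      (1 - ‖a‖ ^ 2) * (1 - ‖b‖ ^ 2) := by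
  simp only [Complex.sq_norm, Complex.normSq_apply, Complex.sub_re, Complex.sub_im,
    Complex.mul_re, Complex.mul_im, Complex.one_re, Complex.one_im, Complex.conj_re,
    Complex.conj_im]
  ring

lemma denom_ne (a b : ℂ) (ha : ‖a‖ < 1) (hb : ‖b‖ < 1) :
    1 - (starRingEnd ℂ) a * b ≠ 0 := by
  intro h
  have h2 : ‖(starRingEnd ℂ) a * b‖ < 1 := by
    rw [norm_mul, Complex.norm_conj]
    nlinarith [norm_nonneg a, norm_nonneg b]
  have : (starRingEnd ℂ) a * b = 1 := by linear_combination -h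
  rw [this] at h2; simp at h2

noncomputable def moeb (a z : ℂ) : ℂ := (a - z) / (1 - (starRingEnd ℂ) a * z)

lemma moeb_mem (a z : ℂ) (ha : ‖a‖ < 1) (hz : ‖z‖ < 1) :
    ‖moeb a z‖ < 1 := by
  have hd := denom_ne a z ha hz
  have hdp : 0 < ‖1 - (starRingEnd ℂ) a * z‖ := norm_pos_iff.mpr hd
  rw [moeb, norm_div, div_lt_one hdp]
  have h := abs_id a z
  have ha1 : 0 < 1 - ‖a‖ ^ 2 := by nlinarith [norm_nonneg a]
  have hz1 : 0 < 1 - ‖z‖ ^ 2 := by nlinarith [norm_nonneg z]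
  have hpos : 0 < (1 - ‖a‖ ^ 2) * (1 - ‖z‖ ^ 2) := mul_pos ha1 hz1
  have : ‖a - z‖ ^ 2 < ‖1 - (starRingEnd ℂ) a * z‖ ^ 2 := by linarith
  exact lt_of_pow_lt_pow_left₀ 2 (norm_nonneg _) this

lemma moeb_self (a : ℂ) (ha : ‖a‖ < 1) : moeb a a = 0 := by
  simp [moeb]

lemma moeb_invol (a z : ℂ) (ha : ‖a‖ < 1) (hz : ‖z‖ < 1) :
    moeb a (moeb a z) = z := by
  have hd := denom_ne a z ha hz
  have haa : 1 - (starRingEnd ℂ) a * a ≠ 0 := denom_ne a a ha ha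
  simp only [moeb]
  have hD : 1 - (starRingEnd ℂ) a * ((a - z) / (1 - (starRingEnd ℂ) a * z)) ≠ 0 := by
    intro h
    apply haa
    field_simp at h
    linear_combination h
  rw [div_eq_iff hD]
  linear_combination -(div_mul_cancel₀ (a - z) hd)

lemma schwarz_pick (f : ℂ → ℂ) (hf : DifferentiableOn ℂ f (ball 0 1))
    (hmap : ∀ z ∈ ball (0 : ℂ) 1, ‖f z‖ < 1) (z w : ℂ)
    (hz : z ∈ ball (0 : ℂ) 1) (hw : w ∈ ball (0 : ℂ) 1) :
    ‖f z - f w‖ * ‖1 - (starRingEnd ℂ) w * z‖ ≤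
      ‖z - w‖ * ‖1 - (starRingEnd ℂ) (f w) * f z‖ := by
  have hz' : ‖z‖ < 1 := mem_ball_zero_iff.mp hz
  have hw' : ‖w‖ < 1 := mem_ball_zero_iff.mp hw
  set a := f w with ha_def
  have ha : ‖a‖ < 1 := hmap w hw
  set g : ℂ → ℂ := fun ζ => moeb a (f (moeb w ζ)) with hg_def
  have hφw_maps : ∀ ζ ∈ ball (0 : ℂ) 1, moeb w ζ ∈ ball (0 : ℂ) 1 := fun ζ hζ =>
    mem_ball_zero_iff.mpr (moeb_mem w ζ hw' (mem_ball_zero_iff.mp hζ))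
  have hgd : DifferentiableOn ℂ g (ball 0 1) := by
    intro ζ hζ
    have hζ' : ‖ζ‖ < 1 := mem_ball_zero_iff.mp hζ
    have hφ : DifferentiableWithinAt ℂ (fun ζ => moeb w ζ) (ball 0 1) ζ := by
      apply DifferentiableWithinAt.div
      · exact (differentiableWithinAt_const w).sub differentiableWithinAt_id
      · exact (differentiableWithinAt_const _).sub
          ((differentiableWithinAt_const _).mul differentiableWithinAt_id)
      · exact denom_ne w ζ hw' hζ'
    have hF : DifferentiableWithinAt ℂ (fun ζ => f (moeb w ζ)) (ball 0 1) ζ := by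
      exact (hf _ (hφw_maps ζ hζ)).comp ζ hφ (fun x hx => hφw_maps x hx)
    have hfm : ‖f (moeb w ζ)‖ < 1 := hmap _ (hφw_maps ζ hζ)
    apply DifferentiableWithinAt.div
    · exact (differentiableWithinAt_const a).sub hF
    · exact (differentiableWithinAt_const _).sub ((differentiableWithinAt_const _).mul hF)
    · exact denom_ne a _ ha hfm
  have hg_maps : Set.MapsTo g (ball (0 : ℂ) 1) (ball (0 : ℂ) 1) := fun ζ hζ =>
    mem_ball_zero_iff.mpr (moeb_mem a _ ha (hmap _ (hφw_maps ζ hζ)))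
  have hg0 : g 0 = 0 := by
    have : moeb w 0 = w := by simp [moeb]
    simp only [hg_def, this, ← ha_def, moeb_self a ha]
  have hζmem : ‖moeb w z‖ < 1 := moeb_mem w z hw' hz'
  have hS := Complex.norm_le_norm_of_mapsTo_ball hgd (hg_maps.mono_right ball_subset_closedBall) hg0 hζmem
  have hgz : g (moeb w z) = moeb a (f z) := by
    simp only [hg_def, moeb_invol w z hw' hz']
  rw [hgz] at hS
  -- unfold the moebius quotients
  have hd1 : 0 < ‖1 - (starRingEnd ℂ) a * f z‖ :=
    norm_pos_iff.mpr (denom_ne a (f z) ha (hmap z hz))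
  have hd2 : 0 < ‖1 - (starRingEnd ℂ) w * z‖ :=
    norm_pos_iff.mpr (denom_ne w z hw' hz')
  rw [moeb, moeb, norm_div, norm_div, div_le_div_iff₀ hd1 hd2] at hS
  calc ‖f z - f w‖ * ‖1 - (starRingEnd ℂ) w * z‖
      = ‖a - f z‖ * ‖1 - (starRingEnd ℂ) w * z‖ := by
        rw [← ha_def, norm_sub_rev]
    _ ≤ ‖w - z‖ * ‖1 - (starRingEnd ℂ) a * f z‖ := hS
    _ = ‖z - w‖ * ‖1 - (starRingEnd ℂ) (f w) * f z‖ := by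
        rw [norm_sub_rev, ha_def]

lemma sp2 (f : ℂ → ℂ) (hf : DifferentiableOn ℂ f (ball 0 1))
    (hmap : ∀ z ∈ ball (0 : ℂ) 1, ‖f z‖ < 1) (z w : ℂ)
    (hz : z ∈ ball (0 : ℂ) 1) (hw : w ∈ ball (0 : ℂ) 1) :
    (1 - ‖w‖ ^ 2) * (1 - ‖z‖ ^ 2) *
        ‖1 - (starRingEnd ℂ) (f w) * f z‖ ^ 2 ≤
      (1 - ‖f w‖ ^ 2) * (1 - ‖f z‖ ^ 2) *
        ‖1 - (starRingEnd ℂ) w * z‖ ^ 2 := by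
  have h := schwarz_pick f hf hmap z w hz hw
  have h2 : (‖f z - f w‖ * ‖1 - (starRingEnd ℂ) w * z‖) ^ 2 ≤
      (‖z - w‖ * ‖1 - (starRingEnd ℂ) (f w) * f z‖) ^ 2 := by
    apply pow_le_pow_left₀ (by positivity) h
  have i1 := abs_id w z
  have i2 := abs_id (f w) (f z)
  rw [norm_sub_rev w z] at i1
  rw [norm_sub_rev (f w) (f z)] at i2
  nlinarith [sq_nonneg (‖1 - (starRingEnd ℂ) (f w) * f z‖),
    sq_nonneg (‖1 - (starRingEnd ℂ) w * z‖),
    sq_nonneg (‖z - w‖), sq_nonneg (‖f z - f w‖)]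

/-- Julia's inequality in the unit disk, for a boundary fixed point at `1`. -/
theorem julia_inequality_disk
    (U : Set ℂ) (hU : IsOpen U) (hUD : ball (0 : ℂ) 1 ⊆ U) (h1U : (1 : ℂ) ∈ U)
    (f : ℂ → ℂ) (hf : DifferentiableOn ℂ f U)
    (hmap : ∀ z ∈ ball (0 : ℂ) 1, ‖f z‖ < 1)
    (hfix : f 1 = 1)
    (hnc : ¬ ∃ w : ℂ, ∀ z ∈ ball (0 : ℂ) 1, f z = w) :
    (deriv f 1).im = 0 ∧ 0 < (deriv f 1).re ∧
      ∀ z ∈ ball (0 : ℂ) 1,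
        (deriv f 1).re * (1 - ‖f z‖ ^ 2) / ‖1 - f z‖ ^ 2 ≥
          (1 - ‖z‖ ^ 2) / ‖1 - z‖ ^ 2 := by
  set c := deriv f 1 with hc_def
  have hball : DifferentiableOn ℂ f (ball 0 1) := hf.mono hUD
  have hder : HasDerivAt f c 1 := (hf.differentiableAt (hU.mem_nhds h1U)).hasDerivAt
  set u : ℝ → ℂ := fun r => (1 - f r) / (1 - (r : ℂ)) with hu_def
  set A : ℝ → ℝ := fun r => (1 - ‖f r‖ ^ 2) / (1 - r ^ 2) with hA_def
  have hIoo : Set.Ioo (0 : ℝ) 1 ∈ nhdsWithin (1 : ℝ) (Set.Iio 1) :=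
    Ioo_mem_nhdsLT_of_mem ⟨by norm_num, le_refl 1⟩
  have hIoo' : Set.Ioo (-1 : ℝ) 1 ∈ nhdsWithin (1 : ℝ) (Set.Iio 1) :=
    Ioo_mem_nhdsLT_of_mem ⟨by norm_num, le_refl 1⟩
  -- the real approach path into the punctured neighborhood of 1
  have hofReal : Filter.Tendsto (fun r : ℝ => (r : ℂ))
      (nhdsWithin 1 (Set.Iio 1)) (nhdsWithin 1 {(1 : ℂ)}ᶜ) := by
    rw [tendsto_nhdsWithin_iff]
    constructor
    · have := (Complex.continuous_ofReal.tendsto 1).mono_left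
        (nhdsWithin_le_nhds (s := Set.Iio (1:ℝ)))
      simpa using this
    · filter_upwards [self_mem_nhdsWithin] with r hr
      simp only [Set.mem_compl_iff, Set.mem_singleton_iff]
      exact_mod_cast ne_of_lt hr
  have htu : Filter.Tendsto u (nhdsWithin 1 (Set.Iio 1)) (nhds c) := by
    have hslope := hasDerivAt_iff_tendsto_slope.mp hder
    have hcomp := hslope.comp hofReal
    apply hcomp.congr
    intro r
    simp only [Function.comp_apply, slope_def_field, hfix, hu_def]
    rw [← neg_div_neg_eq]
    ring_nf
  have h1r0 : Filter.Tendsto (fun r : ℝ => 1 - (r : ℂ)) (nhdsWithin 1 (Set.Iio 1))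
      (nhds 0) := by
    have := (tendsto_const_nhds (x := (1:ℂ)) (f := nhdsWithin (1:ℝ) (Set.Iio 1))).sub
      ((Complex.continuous_ofReal.tendsto 1).mono_left nhdsWithin_le_nhds)
    simpa using this
  have hfr : Filter.Tendsto (fun r : ℝ => f r) (nhdsWithin 1 (Set.Iio 1)) (nhds 1) := by
    have h2 : Filter.Tendsto (fun r : ℝ => 1 - (1 - (r : ℂ)) * u r)
        (nhdsWithin 1 (Set.Iio 1)) (nhds 1) := by
      have := (tendsto_const_nhds (x := (1:ℂ))).sub (h1r0.mul htu)
      simpa using this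
    apply h2.congr'
    filter_upwards [self_mem_nhdsWithin] with r hr
    have hne : (1 : ℂ) - (r : ℂ) ≠ 0 := by
      intro h
      have : (r : ℂ) = 1 := by linear_combination -h
      exact (ne_of_lt hr) (by exact_mod_cast this)
    rw [hu_def]
    field_simp
    ring
  have hA : Filter.Tendsto A (nhdsWithin 1 (Set.Iio 1)) (nhds c.re) := by
    have hre : Filter.Tendsto (fun r => (u r).re) (nhdsWithin 1 (Set.Iio 1)) (nhds c.re) :=
      (Complex.continuous_re.tendsto c).comp htu
    have habsu : Filter.Tendsto (fun r => ‖u r‖)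
        (nhdsWithin 1 (Set.Iio 1)) (nhds (‖c‖)) :=
      (continuous_norm.tendsto c).comp htu
    have hbase : Filter.Tendsto (fun r : ℝ => r) (nhdsWithin 1 (Set.Iio 1)) (nhds 1) :=
      Filter.tendsto_id.mono_right nhdsWithin_le_nhds
    have h1mr : Filter.Tendsto (fun r : ℝ => 1 - r) (nhdsWithin 1 (Set.Iio 1)) (nhds 0) := by
      simpa using hbase.const_sub (1 : ℝ)
    have h1pr : Filter.Tendsto (fun r : ℝ => 1 + r) (nhdsWithin 1 (Set.Iio 1)) (nhds 2) := by
      have := hbase.const_add (1 : ℝ)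
      norm_num at this
      exact this
    have hnum : Filter.Tendsto (fun r => 2 * (u r).re - (1 - r) * ‖u r‖ ^ 2)
        (nhdsWithin 1 (Set.Iio 1)) (nhds (2 * c.re)) := by
      have := (hre.const_mul 2).sub (h1mr.mul (habsu.pow 2))
      simpa using this
    have hA' : Filter.Tendsto
        (fun r => (2 * (u r).re - (1 - r) * ‖u r‖ ^ 2) / (1 + r))
        (nhdsWithin 1 (Set.Iio 1)) (nhds c.re) := by
      have := hnum.div h1pr (by norm_num)
      convert this using 2
      · rfl
      · ring
    apply hA'.congr'
    filter_upwards [hIoo'] with r hr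
    obtain ⟨hrm, hr1⟩ := hr
    have hr1' : (1 : ℝ) - r ≠ 0 := by linarith
    have hrp : (0 : ℝ) < 1 + r := by linarith
    have hne : (1 : ℂ) - (r : ℂ) ≠ 0 := by
      intro h
      have : ((1 : ℝ) - r : ℂ) = 0 := by push_cast; linear_combination h
      exact hr1' (by exact_mod_cast this)
    have hfu : f r = 1 - ((1 : ℂ) - (r : ℂ)) * u r := by
      rw [hu_def]
      field_simp
      ring
    show (2 * (u r).re - (1 - r) * ‖u r‖ ^ 2) / (1 + r) =
      (1 - ‖f r‖ ^ 2) / (1 - r ^ 2)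
    rw [hfu]
    generalize u r = v
    rw [div_eq_div_iff (ne_of_gt hrp) (ne_of_gt (by nlinarith : (0:ℝ) < 1 - r ^ 2))]
    rw [Complex.sq_norm, Complex.sq_norm]
    simp only [Complex.normSq_apply, Complex.sub_re, Complex.sub_im, Complex.mul_re,
      Complex.mul_im, Complex.one_re, Complex.one_im, Complex.ofReal_re, Complex.ofReal_im]
    ring
  -- the key inequality
  have hstar : ∀ z ∈ ball (0 : ℂ) 1,
      (1 - ‖z‖ ^ 2) * ‖1 - f z‖ ^ 2 ≤
        c.re * ((1 - ‖f z‖ ^ 2) * ‖1 - z‖ ^ 2) := by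
    intro z hz
    have hL : Filter.Tendsto
        (fun r : ℝ => (1 - ‖z‖ ^ 2) *
          ‖1 - (starRingEnd ℂ) (f r) * f z‖ ^ 2)
        (nhdsWithin 1 (Set.Iio 1))
        (nhds ((1 - ‖z‖ ^ 2) * ‖1 - f z‖ ^ 2)) := by
      have hconj : Filter.Tendsto (fun r : ℝ => (starRingEnd ℂ) (f r))
          (nhdsWithin 1 (Set.Iio 1)) (nhds 1) := by
        have := (Complex.continuous_conj.tendsto 1).comp hfr
        simpa [Function.comp_def] using this
      have hinner : Filter.Tendsto (fun r : ℝ => 1 - (starRingEnd ℂ) (f r) * f z)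
          (nhdsWithin 1 (Set.Iio 1)) (nhds (1 - f z)) := by
        have := (tendsto_const_nhds (x := (1:ℂ))).sub (hconj.mul (tendsto_const_nhds (x := f z)))
        simpa using this
      exact (((continuous_norm.tendsto _).comp hinner).pow 2).const_mul _
    have hR : Filter.Tendsto
        (fun r : ℝ => A r * ((1 - ‖f z‖ ^ 2) * ‖1 - (r : ℂ) * z‖ ^ 2))
        (nhdsWithin 1 (Set.Iio 1))
        (nhds (c.re * ((1 - ‖f z‖ ^ 2) * ‖1 - z‖ ^ 2))) := by
      have hinner : Filter.Tendsto (fun r : ℝ => 1 - (r : ℂ) * z)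
          (nhdsWithin 1 (Set.Iio 1)) (nhds (1 - z)) := by
        have hor : Filter.Tendsto (fun r : ℝ => ((r : ℂ))) (nhdsWithin (1:ℝ) (Set.Iio 1))
            (nhds 1) := by
          have := (Complex.continuous_ofReal.tendsto 1).mono_left
            (nhdsWithin_le_nhds (s := Set.Iio (1:ℝ)))
          simpa using this
        have := (tendsto_const_nhds (x := (1:ℂ))).sub (hor.mul (tendsto_const_nhds (x := z)))
        simpa using this
      exact hA.mul ((((continuous_norm.tendsto _).comp hinner).pow 2).const_mul _)
    refine le_of_tendsto_of_tendsto hL hR ?_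
    filter_upwards [hIoo] with r hr
    obtain ⟨hr0, hr1⟩ := hr
    have hrball : ((r : ℂ)) ∈ ball (0 : ℂ) 1 := by
      rw [mem_ball_zero_iff]
      simp only [Complex.norm_real, Real.norm_eq_abs]
      rw [abs_of_pos hr0]
      exact hr1
    have h := sp2 f hball hmap z (r : ℂ) hz hrball
    rw [Complex.conj_ofReal, Complex.norm_real, Real.norm_eq_abs, abs_of_pos hr0] at h
    have hr2 : (0 : ℝ) < 1 - r ^ 2 := by nlinarith
    rw [hA_def]
    rw [div_mul_eq_mul_div, le_div_iff₀ hr2]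
    nlinarith [h]
  -- positivity of denominators
  have hden : ∀ z ∈ ball (0 : ℂ) 1, 0 < ‖1 - z‖ ^ 2 := by
    intro z hz
    have hz' : ‖z‖ < 1 := mem_ball_zero_iff.mp hz
    have : (1 : ℂ) - z ≠ 0 := by
      intro h
      have : z = 1 := by linear_combination -h
      rw [this] at hz'
      simp at hz'
    exact pow_pos (norm_pos_iff.mpr this) 2
  have hfden : ∀ z ∈ ball (0 : ℂ) 1, 0 < ‖1 - f z‖ ^ 2 := by
    intro z hz
    have hz' : ‖f z‖ < 1 := hmap z hz
    have : (1 : ℂ) - f z ≠ 0 := by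
      intro h
      have : f z = 1 := by linear_combination -h
      rw [this] at hz'
      simp at hz'
    exact pow_pos (norm_pos_iff.mpr this) 2
  have hfz1 : ∀ z ∈ ball (0 : ℂ) 1, 0 < 1 - ‖f z‖ ^ 2 := by
    intro z hz
    have hz' : ‖f z‖ < 1 := hmap z hz
    nlinarith [norm_nonneg (f z)]
  -- positivity of c.re
  have hcre : 0 < c.re := by
    have h0 : (0 : ℂ) ∈ ball (0 : ℂ) 1 := mem_ball_self one_pos
    have h := hstar 0 h0
    norm_num at h
    have h1 := hfden 0 h0
    have h2 := hfz1 0 h0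
    nlinarith [h, h1, h2]
  refine ⟨?_, hcre, ?_⟩
  · -- Im c = 0
    have hBound : ∀ᶠ r in nhdsWithin (1 : ℝ) (Set.Iio 1),
        ‖u r‖ ^ 2 ≤ c.re * A r := by
      filter_upwards [hIoo] with r hr
      obtain ⟨hr0, hr1⟩ := hr
      have hrball : ((r : ℂ)) ∈ ball (0 : ℂ) 1 := by
        rw [mem_ball_zero_iff]
        simp only [Complex.norm_real, Real.norm_eq_abs]
        rw [abs_of_pos hr0]
        exact hr1
      have hstarr := hstar (r : ℂ) hrball
      rw [Complex.norm_real, Real.norm_eq_abs, abs_of_pos hr0] at hstarr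
      have habs1r : ‖1 - (r : ℂ)‖ = 1 - r := by
        rw [show (1 : ℂ) - (r : ℂ) = ((1 - r : ℝ) : ℂ) by push_cast; ring,
          Complex.norm_real, Real.norm_eq_abs, abs_of_pos (by linarith)]
      rw [habs1r] at hstarr
      have hne : (1 : ℂ) - (r : ℂ) ≠ 0 := by
        intro h
        have : ((1 : ℝ) - r : ℂ) = 0 := by push_cast; linear_combination h
        have : (1 : ℝ) - r = 0 := by exact_mod_cast this
        linarith
      have e1 : ‖u r‖ ^ 2 = ‖1 - f r‖ ^ 2 / (1 - r) ^ 2 := by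
        rw [hu_def]
        simp only [norm_div, habs1r]
        rw [div_pow]
      have hpos1 : (0 : ℝ) < (1 - r) ^ 2 := pow_pos (by linarith) 2
      have hpos2 : (0 : ℝ) < 1 - r ^ 2 := by nlinarith
      rw [e1, hA_def, ← mul_div_assoc, div_le_div_iff₀ hpos1 hpos2]
      nlinarith [hstarr]
    have hlim2 : Filter.Tendsto (fun r => ‖u r‖ ^ 2)
        (nhdsWithin 1 (Set.Iio 1)) (nhds (‖c‖ ^ 2)) :=
      ((continuous_norm.tendsto c).comp htu).pow 2
    have hlim3 : Filter.Tendsto (fun r => c.re * A r)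
        (nhdsWithin 1 (Set.Iio 1)) (nhds (c.re * c.re)) := hA.const_mul c.re
    have habsle : ‖c‖ ^ 2 ≤ c.re * c.re :=
      le_of_tendsto_of_tendsto hlim2 hlim3 hBound
    have hsq : ‖c‖ ^ 2 = c.re ^ 2 + c.im ^ 2 := by
      rw [Complex.sq_norm, Complex.normSq_apply]
      ring
    have him : c.im ^ 2 ≤ 0 := by nlinarith
    have him0 : c.im ^ 2 = 0 := le_antisymm him (sq_nonneg _)
    exact pow_eq_zero_iff (by norm_num) |>.mp him0
  · -- the main inequality
    intro z hz
    have h := hstar z hz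
    rw [ge_iff_le, div_le_div_iff₀ (hden z hz) (hfden z hz)]
    nlinarith [h]
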